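/- Let (C₁, ∂₁) and (C₂, ∂₂) be free, finitely generated chain complexes over S = 𝔽₂[U] with chosen bases B₁ and B₂ respectively, and let F : C₁ → C₂ be an S-linear chain map (F ∘ ∂₁ = ∂₂ ∘ F). Then F ∘ Φ_{B₁} + Φ_{B₂} ∘ F is null-homotopic: there exists an S-linear map H : C₁ → C₂ with F ∘ Φ_{B₁} + Φ_{B₂} ∘ F = ∂₂ ∘ H + H ∘ ∂₁. (General naturality statement proved in the proof of Lemma 3.3 of the paper.) -/

import Mathlib

noncomputable section

abbrev F2 : Type := ZMod 2

/-- `S = 𝔽₂[U]`, the polynomial ring over `𝔽₂`. -/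
abbrev S2 : Type := Polynomial F2

/-- The map `Φ_B` obtained by formally differentiating (with respect to `U`) the matrix of
the differential `∂` in the basis `B`: if `∂ e_i = Σ_j P_{ij} e_j` then
`Φ_B e_i = Σ_j P'_{ij} e_j`. -/
def Phi {C ι : Type} [AddCommGroup C] [Module S2 C] (B : Module.Basis ι S2 C)
    (d : C →ₗ[S2] C) : C →ₗ[S2] C :=
  B.constr S2 fun i => (B.repr (d (B i))).sum fun j p => (Polynomial.derivative p) • B j

open Polynomial

def Der {C₁ C₂ ι₁ ι₂ : Type} [AddCommGroup C₁] [Module S2 C₁] [AddCommGroup C₂] [Module S2 C₂]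
    (B₁ : Module.Basis ι₁ S2 C₁) (B₂ : Module.Basis ι₂ S2 C₂) (L : C₁ →ₗ[S2] C₂) : C₁ →ₗ[S2] C₂ :=
  B₁.constr S2 fun i => (B₂.repr (L (B₁ i))).sum fun j p => (derivative p) • B₂ j

lemma Der_basis {C₁ C₂ ι₁ ι₂ : Type} [AddCommGroup C₁] [Module S2 C₁] [AddCommGroup C₂]
    [Module S2 C₂] [Fintype ι₂]
    (B₁ : Module.Basis ι₁ S2 C₁) (B₂ : Module.Basis ι₂ S2 C₂) (L : C₁ →ₗ[S2] C₂) (i : ι₁) :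
    Der B₁ B₂ L (B₁ i) = ∑ j, derivative (B₂.repr (L (B₁ i)) j) • B₂ j := by
  rw [Der, Module.Basis.constr_basis, Finsupp.sum_fintype]
  intro j; simp

lemma Der_comp {C₁ C₂ C₃ ι₁ ι₂ ι₃ : Type} [AddCommGroup C₁] [Module S2 C₁]
    [AddCommGroup C₂] [Module S2 C₂] [AddCommGroup C₃] [Module S2 C₃]
    [Fintype ι₁] [Fintype ι₂] [Fintype ι₃]
    (B₁ : Module.Basis ι₁ S2 C₁) (B₂ : Module.Basis ι₂ S2 C₂) (B₃ : Module.Basis ι₃ S2 C₃)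
    (G : C₂ →ₗ[S2] C₃) (K : C₁ →ₗ[S2] C₂) :
    Der B₁ B₃ (G ∘ₗ K) = Der B₂ B₃ G ∘ₗ K + G ∘ₗ Der B₁ B₂ K := by
  apply B₁.ext
  intro i
  set p : ι₂ → S2 := fun j => B₂.repr (K (B₁ i)) j with hp
  set q : ι₂ → ι₃ → S2 := fun j k => B₃.repr (G (B₂ j)) k with hq
  have hK : K (B₁ i) = ∑ j, p j • B₂ j := (B₂.sum_repr _).symm
  have hG : ∀ j, G (B₂ j) = ∑ k, q j k • B₃ k := fun j => (B₃.sum_repr _).symm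
  have hrepr : ∀ k, B₃.repr ((G ∘ₗ K) (B₁ i)) k = ∑ j, p j * q j k := by
    intro k
    rw [LinearMap.comp_apply, hK, map_sum, map_sum]
    simp [Finsupp.sum_apply, mul_comm, hq]
  -- LHS
  rw [Der_basis]
  have hLHS : ∑ k, derivative (B₃.repr ((G ∘ₗ K) (B₁ i)) k) • B₃ k
      = ∑ k, (∑ j, (derivative (p j) * q j k + p j * derivative (q j k))) • B₃ k := by
    refine Finset.sum_congr rfl fun k _ => ?_
    rw [hrepr, map_sum]
    congr 1
    exact Finset.sum_congr rfl fun j _ => by rw [derivative_mul]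
  rw [hLHS]
  -- RHS
  have hR1 : Der B₂ B₃ G (K (B₁ i)) = ∑ j, ∑ k, (p j * derivative (q j k)) • B₃ k := by
    rw [hK, map_sum]
    refine Finset.sum_congr rfl fun j _ => ?_
    rw [map_smul, Der_basis, Finset.smul_sum]
    exact Finset.sum_congr rfl fun k _ => by rw [smul_smul]
  have hR2 : G (Der B₁ B₂ K (B₁ i)) = ∑ j, ∑ k, (derivative (p j) * q j k) • B₃ k := by
    rw [Der_basis, map_sum]
    refine Finset.sum_congr rfl fun j _ => ?_
    rw [map_smul, hG, Finset.smul_sum]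
    exact Finset.sum_congr rfl fun k _ => by rw [smul_smul]
  simp only [LinearMap.add_apply, LinearMap.comp_apply]
  rw [hR1.trans Finset.sum_comm, hR2.trans Finset.sum_comm,
    ← Finset.sum_add_distrib]
  refine Finset.sum_congr rfl fun k _ => ?_
  rw [Finset.sum_smul, ← Finset.sum_add_distrib]
  refine Finset.sum_congr rfl fun j _ => ?_
  rw [add_smul, add_comm]

/-- **Naturality of `Φ` (proof of Lemma 3.3)**: if `F : (C₁,∂₁) → (C₂,∂₂)` is an
`S`-linear chain map between free, finitely generated chain complexes over `S = 𝔽₂[U]`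
with chosen bases `B₁`, `B₂`, then `F ∘ Φ_{B₁} + Φ_{B₂} ∘ F` is null-homotopic. -/
theorem Phi_natural_up_to_chain_homotopy
    {C₁ C₂ ι₁ ι₂ : Type} [AddCommGroup C₁] [Module S2 C₁] [AddCommGroup C₂] [Module S2 C₂]
    [Fintype ι₁] [Fintype ι₂]
    (d₁ : C₁ →ₗ[S2] C₁) (hd₁ : d₁ ∘ₗ d₁ = 0)
    (d₂ : C₂ →ₗ[S2] C₂) (hd₂ : d₂ ∘ₗ d₂ = 0)
    (B₁ : Module.Basis ι₁ S2 C₁) (B₂ : Module.Basis ι₂ S2 C₂)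
    (F : C₁ →ₗ[S2] C₂) (hF : F ∘ₗ d₁ = d₂ ∘ₗ F) :
    ∃ H : C₁ →ₗ[S2] C₂, F ∘ₗ Phi B₁ d₁ + Phi B₂ d₂ ∘ₗ F = d₂ ∘ₗ H + H ∘ₗ d₁ := by
  refine ⟨Der B₁ B₂ F, ?_⟩
  have hPhi1 : Phi B₁ d₁ = Der B₁ B₁ d₁ := rfl
  have hPhi2 : Phi B₂ d₂ = Der B₂ B₂ d₂ := rfl
  have key : Der B₂ B₂ d₂ ∘ₗ F + d₂ ∘ₗ Der B₁ B₂ F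
      = Der B₁ B₂ F ∘ₗ d₁ + F ∘ₗ Der B₁ B₁ d₁ := by
    rw [← Der_comp B₁ B₂ B₂ d₂ F, ← Der_comp B₁ B₁ B₂ F d₁, hF]
  have two : ∀ L : C₁ →ₗ[S2] C₂, L + L = 0 := by
    intro L
    ext x
    have h2 : (2 : S2) = 0 := by
      have := CharP.cast_eq_zero S2 2
      simpa using this
    have : L x + L x = (2 : S2) • L x := (two_smul S2 (L x)).symm
    simp [LinearMap.add_apply, this, h2]
  rw [hPhi1, hPhi2]
  set a := F ∘ₗ Der B₁ B₁ d₁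
  set b := Der B₂ B₂ d₂ ∘ₗ F
  set c := d₂ ∘ₗ Der B₁ B₂ F
  set h := Der B₁ B₂ F ∘ₗ d₁
  have zero : b + c + (h + a) = 0 := by rw [key]; exact two _
  have e1 : a + b = a + b + (b + c + (h + a)) := by rw [zero, add_zero]
  have e2 : a + b + (b + c + (h + a)) = c + h + ((a + a) + (b + b)) := by abel
  rw [e1, e2, two, two, add_zero, add_zero]

end
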